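/- Let G be a Lie group, let f : [0,1] → G be a continuous path, and put C = f([0,1]) and P = CC⁻¹. Then the following are equivalent: (1) C is spacious in G; (2) there exists a finite subset F ⊆ G with 1 ∈ F such that the subgroup of G generated by ⋃_{g∈F} gPg⁻¹ equals the identity component G° of G. -/

import Mathlib

open scoped Manifold Pointwise

/-- A subset `C` of a topological group is spacious if some product of finitely many left
translates of `CC⁻¹` has nonempty interior. -/
def Spacious {G : Type*} [Group G] [TopologicalSpace G] (C : Set G) : Prop :=
  ∃ (r : ℕ) (g : Fin (r + 1) → G),
    (interior (((List.finRange (r + 1)).map fun i => {g i} * (C * C⁻¹)).prod)).Nonempty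

section Aux

variable {G : Type*} [Group G]

/-- Product of left translates of `P` along a list. -/
def PathLProd (P : Set G) (b : List G) : Set G := (b.map fun a => {a} * P).prod

/-- Product of conjugates of `P` along a list. -/
def PathQProd (P : Set G) (b : List G) : Set G := (b.map fun a => {a} * P * {a⁻¹}).prod

lemma singleton_mul_singleton_mul (a b : G) (s : Set G) :
    ({a} : Set G) * ({b} * s) = {a * b} * s := by
  rw [← mul_assoc, Set.singleton_mul_singleton]

lemma PathLProd_cons (P : Set G) (a : G) (t : List G) :
    PathLProd P (a :: t) = {a} * P * PathLProd P t := by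
  simp [PathLProd, List.map_cons, List.prod_cons, mul_assoc]

lemma PathQProd_cons (P : Set G) (a : G) (t : List G) :
    PathQProd P (a :: t) = {a} * P * {a⁻¹} * PathQProd P t := by
  simp [PathQProd, List.map_cons, List.prod_cons, mul_assoc]

lemma PathLProd_finRange (P : Set G) (b : List G) :
    ((List.finRange b.length).map fun i => {b.get i} * P).prod = PathLProd P b := by
  conv_rhs => rw [PathLProd, ← List.ofFn_get b, List.map_ofFn, List.ofFn_eq_map]
  rfl

lemma PathLProd_ofFn (P : Set G) {n : ℕ} (g : Fin n → G) :
    ((List.finRange n).map fun i => {g i} * P).prod = PathLProd P (List.ofFn g) := by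
  rw [PathLProd, List.map_ofFn, List.ofFn_eq_map]
  rfl

/-- Rewriting a product of conjugates as a product of left translates times a singleton. -/
lemma PathQProd_eq_PathLProd_mul (P : Set G) :
    ∀ b : List G, b ≠ [] → ∃ (b' : List G) (c : G),
      b' ≠ [] ∧ PathQProd P b = PathLProd P b' * {c}
  | [], h => absurd rfl h
  | [a], _ => by
      refine ⟨[a], a⁻¹, by simp, ?_⟩
      rw [PathQProd_cons, PathLProd_cons]
      simp [PathQProd, PathLProd, mul_assoc]
  | a :: d :: u, _ => by
      obtain ⟨b', c, hb'ne, heq⟩ := PathQProd_eq_PathLProd_mul P (d :: u) (by simp)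
      rcases b' with _ | ⟨e, b''⟩
      · exact absurd rfl hb'ne
      refine ⟨a :: (a⁻¹ * e) :: b'', c, by simp, ?_⟩
      rw [PathQProd_cons, heq, PathLProd_cons, PathLProd_cons, PathLProd_cons]
      rw [show ({a} : Set G) * P * {a⁻¹} * ({e} * P * PathLProd P b'' * {c})
            = {a} * P * ({a⁻¹} * ({e} * (P * PathLProd P b'' * {c}))) by
        simp only [mul_assoc]]
      rw [singleton_mul_singleton_mul]
      simp only [mul_assoc]

variable [TopologicalSpace G] [IsTopologicalGroup G]

lemma interior_nonempty_of_mul_singleton {S : Set G} {c : G}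
    (h : (interior (S * {c})).Nonempty) : (interior S).Nonempty := by
  obtain ⟨x, hx⟩ := h
  have hopen : IsOpen (interior (S * {c}) * {c⁻¹}) := isOpen_interior.mul_right
  have hsub : interior (S * {c}) * {c⁻¹} ⊆ S := by
    rintro z ⟨y, hy, w, hw, rfl⟩
    rcases interior_subset hy with ⟨s, hs, w', hw', rfl⟩
    rcases hw' with rfl
    rcases hw with rfl
    simpa [mul_assoc] using hs
  exact ⟨x * c⁻¹, interior_maximal hsub hopen (Set.mul_mem_mul hx rfl)⟩

omit [TopologicalSpace G] [IsTopologicalGroup G] in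
/-- Key computation: a product of left translates of `P` is contained in `H * {c * l.prod}`
provided all the prefix-product conjugates of `P` lie in `H`. -/
lemma mul_PathLProd_subset (P : Set G) (H : Subgroup G) :
    ∀ (l : List G) (c : G),
      (∀ k, ∀ p ∈ P, (c * (l.take k).prod) * p * (c * (l.take k).prod)⁻¹ ∈ H) →
      {c} * PathLProd P l ⊆ (H : Set G) * {c * l.prod}
  | [], c, _ => by
      intro x hx
      rw [PathLProd, List.map_nil, List.prod_nil, mul_one] at hx
      rcases hx with rfl
      rw [List.prod_nil, mul_one]
      exact ⟨1, H.one_mem, _, rfl, one_mul _⟩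
  | a :: t, c, hc => by
      have h1 : ∀ p ∈ P, (c * a) * p * (c * a)⁻¹ ∈ H := by
        intro p hp
        simpa using hc 1 p hp
      have ih := mul_PathLProd_subset P H t (c * a) (fun k p hp => by
        simpa [List.take_succ_cons, mul_assoc] using hc (k + 1) p hp)
      have step1 : ({c} : Set G) * PathLProd P (a :: t) = {c * a} * P * PathLProd P t := by
        rw [PathLProd_cons, ← mul_assoc, ← mul_assoc, ← Set.singleton_mul_singleton]
      have step2 : ({c * a} : Set G) * P ⊆ (H : Set G) * {c * a} := by
        rintro x ⟨y, hy, p, hp, rfl⟩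
        rcases hy with rfl
        show (c * a) * p ∈ (H : Set G) * {c * a}
        have : (c * a) * p = ((c * a) * p * (c * a)⁻¹) * (c * a) := by group
        rw [this]
        exact Set.mul_mem_mul (h1 p hp) rfl
      calc ({c} : Set G) * PathLProd P (a :: t) = {c * a} * P * PathLProd P t := step1
        _ ⊆ ((H : Set G) * {c * a}) * PathLProd P t := Set.mul_subset_mul_right step2
        _ = (H : Set G) * ({c * a} * PathLProd P t) := by rw [mul_assoc]
        _ ⊆ (H : Set G) * ((H : Set G) * {(c * a) * t.prod}) := Set.mul_subset_mul_left ih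
        _ ⊆ (H : Set G) * {c * (a :: t).prod} := by
            rintro x ⟨h₁, hh₁, y, ⟨h₂, hh₂, z, hz, rfl⟩, rfl⟩
            rcases hz with rfl
            show h₁ * (h₂ * ((c * a) * t.prod)) ∈ (H : Set G) * {c * (a :: t).prod}
            have he : h₁ * (h₂ * ((c * a) * t.prod)) = (h₁ * h₂) * (c * (a :: t).prod) := by
              rw [List.prod_cons]; group
            rw [he]
            exact Set.mul_mem_mul (H.mul_mem hh₁ hh₂) rfl

lemma isOpen_of_subset_mul_singleton {S : Set G} (H : Subgroup G) (w : G)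
    (hS : S ⊆ (H : Set G) * {w}) (hne : (interior S).Nonempty) :
    IsOpen (H : Set G) := by
  obtain ⟨x, hx⟩ := hne
  have hopen : IsOpen (interior S * {w⁻¹}) := isOpen_interior.mul_right
  have hsub : interior S * {w⁻¹} ⊆ (H : Set G) := by
    rintro z ⟨y, hy, v, hv, rfl⟩
    rcases hv with rfl
    rcases hS (interior_subset hy) with ⟨h, hh, w', hw', rfl⟩
    rcases hw' with rfl
    simpa [mul_assoc] using hh
  exact Subgroup.isOpen_of_mem_nhds H (g := x * w⁻¹)
    (Filter.mem_of_superset (hopen.mem_nhds (Set.mul_mem_mul hx rfl)) hsub)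

end Aux

/-- Let `G` be a Lie group, `f : [0,1] → G` a continuous path,
`C = f([0,1])` and `P = CC⁻¹`. Then `C` is spacious in `G` if and only if there is a finite
set `F ⊆ G` with `1 ∈ F` such that the subgroup generated by `⋃_{g ∈ F} gPg⁻¹` is the
identity component `G°`. -/
theorem spacious_iff_generates_identityComponent {E G : Type*} [NormedAddCommGroup E]
    [NormedSpace ℝ E] [FiniteDimensional ℝ E] [Group G] [TopologicalSpace G]
    [IsTopologicalGroup G] [LocallyCompactSpace G] [ChartedSpace E G] [LieGroup 𝓘(ℝ, E) (⊤ : ℕ∞) G]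
    (f : Set.Icc (0 : ℝ) 1 → G) (hf : Continuous f) :
    Spacious (Set.range f) ↔
      ∃ F : Finset G, (1 : G) ∈ F ∧
        (Subgroup.closure
            (⋃ g ∈ F, (fun p => g * p * g⁻¹) '' (Set.range f * (Set.range f)⁻¹)) : Set G)
          = connectedComponent (1 : G) := by
  classical
  haveI : T1Space G := ChartedSpace.t1Space E G
  haveI : T2Space G := IsTopologicalGroup.t2Space_iff_one_closed.2 isClosed_singleton
  haveI : LocallyConnectedSpace G := ChartedSpace.locallyConnectedSpace E G
  haveI : ConnectedSpace (Set.Icc (0 : ℝ) 1) :=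
    Subtype.connectedSpace (isConnected_Icc zero_le_one)
  set C : Set G := Set.range f with hC
  set P : Set G := C * C⁻¹ with hPdef
  have hCconn : IsConnected C := isConnected_range hf
  have hCcomp : IsCompact C := isCompact_range hf
  obtain ⟨c₀, hc₀⟩ := hCconn.nonempty
  have h1P : (1 : G) ∈ P := by
    rw [hPdef]
    have : c₀ * c₀⁻¹ ∈ C * C⁻¹ := Set.mul_mem_mul hc₀ (Set.inv_mem_inv.2 hc₀)
    simpa using this
  have hPcomp : IsCompact P := hCcomp.mul hCcomp.inv
  have hPimg : P = (fun q : G × G => q.1 * q.2⁻¹) '' (C ×ˢ C) := by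
    ext x
    constructor
    · rintro ⟨a, ha, b, hb, rfl⟩
      exact ⟨(a, b⁻¹), ⟨ha, by simpa using hb⟩, by simp⟩
    · rintro ⟨⟨a, b⟩, ⟨ha, hb⟩, rfl⟩
      exact Set.mul_mem_mul ha (Set.inv_mem_inv.2 hb)
  have hPconn : IsPreconnected P := by
    rw [hPimg]
    exact (hCconn.isPreconnected.prod hCconn.isPreconnected).image _
      ((continuous_fst.mul continuous_snd.inv).continuousOn)
  have hconj_conn : ∀ a : G, IsPreconnected ((fun p => a * p * a⁻¹) '' P) := fun a =>
    hPconn.image _ ((continuous_const.mul continuous_id |>.mul continuous_const).continuousOn)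
  have hconj_one : ∀ a : G, (1 : G) ∈ (fun p => a * p * a⁻¹) '' P := fun a =>
    ⟨1, h1P, by simp⟩
  constructor
  · rintro ⟨r, g, hne⟩
    set l : List G := List.ofFn g with hl
    set F : Finset G := insert 1 ((Finset.range (r + 2)).image fun k => (l.take k).prod)
      with hF
    set T : Set G := ⋃ a ∈ F, (fun p => a * p * a⁻¹) '' P with hT
    set H : Subgroup G := Subgroup.closure T with hH
    refine ⟨F, Finset.mem_insert_self _ _, ?_⟩
    have hTH : ∀ a ∈ F, ∀ p ∈ P, a * p * a⁻¹ ∈ H := fun a ha p hp =>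
      Subgroup.subset_closure (Set.mem_biUnion ha ⟨p, hp, rfl⟩)
    have hllen : l.length = r + 1 := by simp [hl]
    have hprefix : ∀ k, (l.take k).prod ∈ F := by
      intro k
      rcases le_or_gt k (r + 1) with hk | hk
      · exact Finset.mem_insert_of_mem
          (Finset.mem_image.2 ⟨k, Finset.mem_range.2 (by omega), rfl⟩)
      · have : l.take k = l.take (r + 1) := by
          rw [List.take_of_length_le (by omega), List.take_of_length_le (by omega)]
        rw [this]
        exact Finset.mem_insert_of_mem
          (Finset.mem_image.2 ⟨r + 1, Finset.mem_range.2 (by omega), rfl⟩)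
    have hSsub : ((List.finRange (r + 1)).map fun i => {g i} * P).prod
        ⊆ (H : Set G) * {l.prod} := by
      rw [PathLProd_ofFn, ← hl]
      have := mul_PathLProd_subset P H l 1 (fun k p hp => by
        simpa using hTH _ (hprefix k) p hp)
      have e : ({1} : Set G) * PathLProd P l = PathLProd P l := by rw [Set.singleton_mul]; simp
      rw [e, one_mul] at this
      exact this
    have hopen : IsOpen (H : Set G) := isOpen_of_subset_mul_singleton H l.prod hSsub hne
    have hsub1 : connectedComponent (1 : G) ⊆ (H : Set G) :=
      IsClopen.connectedComponent_subset ⟨H.isClosed_of_isOpen hopen, hopen⟩ H.one_mem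
    have hsub2 : (H : Set G) ⊆ connectedComponent (1 : G) := by
      have hTsub : T ⊆ connectedComponent (1 : G) := by
        rw [hT]
        exact Set.iUnion₂_subset fun a _ =>
          (hconj_conn a).subset_connectedComponent (hconj_one a)
      exact (Subgroup.closure_le (Subgroup.connectedComponentOfOne G)).2 hTsub
    exact Set.Subset.antisymm hsub2 hsub1
  · rintro ⟨F, h1F, hFeq⟩
    set T : Set G := ⋃ a ∈ F, (fun p => a * p * a⁻¹) '' P with hT
    set H : Subgroup G := Subgroup.closure T with hH
    have hPinv : P⁻¹ = P := by
      rw [hPdef, mul_inv_rev, inv_inv]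
    have hTinv : T⁻¹ = T := by
      apply Set.Subset.antisymm
      · rintro x hx
        rw [Set.mem_inv, hT, Set.mem_iUnion₂] at hx
        obtain ⟨a, ha, p, hp, hpe⟩ := hx
        rw [hT, Set.mem_iUnion₂]
        refine ⟨a, ha, p⁻¹, by rw [← hPinv]; exact Set.inv_mem_inv.2 hp, ?_⟩
        have hpe' : a * p * a⁻¹ = x⁻¹ := hpe
        have : x = (a * p * a⁻¹)⁻¹ := by rw [hpe']; group
        rw [this]; group
      · intro x hx
        rw [hT, Set.mem_iUnion₂] at hx
        obtain ⟨a, ha, p, hp, hpe⟩ := hx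
        rw [Set.mem_inv, hT, Set.mem_iUnion₂]
        refine ⟨a, ha, p⁻¹, by rw [← hPinv]; exact Set.inv_mem_inv.2 hp, ?_⟩
        have hpe' : a * p * a⁻¹ = x := hpe
        show a * p⁻¹ * a⁻¹ = x⁻¹
        rw [← hpe']; group
    have hmem : ∀ x ∈ H, ∃ bs : List {a : G // a ∈ F}, x ∈ PathQProd P (bs.map (↑)) := by
      intro x hx
      have hx' : x ∈ Submonoid.closure (T ∪ T⁻¹) := by
        rw [← Subgroup.closure_toSubmonoid]; exact hx
      rw [hTinv, Set.union_self] at hx'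
      obtain ⟨ll, hll, rfl⟩ := Submonoid.exists_list_of_mem_closure hx'
      clear hx hx'
      induction ll with
      | nil =>
        refine ⟨[], ?_⟩
        simp only [List.map_nil, PathQProd, List.prod_nil]
        exact Set.mem_one.2 rfl
      | cons y t ih =>
        obtain ⟨bs, hbs⟩ := ih (fun z hz => hll z (List.mem_cons_of_mem _ hz))
        have hy : y ∈ T := hll y List.mem_cons_self
        rw [hT, Set.mem_iUnion₂] at hy
        obtain ⟨a, ha, p, hp, hpe⟩ := hy
        refine ⟨⟨a, ha⟩ :: bs, ?_⟩
        rw [List.map_cons, PathQProd_cons, List.prod_cons]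
        refine Set.mul_mem_mul ?_ hbs
        have hpe' : a * p * a⁻¹ = y := hpe
        rw [← hpe']
        exact Set.mul_mem_mul (Set.mul_mem_mul rfl hp) rfl
    have hQcomp : ∀ b : List G, IsCompact (PathQProd P b) := by
      intro b
      induction b with
      | nil =>
        have h : PathQProd P [] = ({1} : Set G) := by
          simp only [PathQProd, List.map_nil, List.prod_nil, Set.singleton_one]
        rw [h]
        exact isCompact_singleton
      | cons a t ih =>
        rw [PathQProd_cons]
        exact ((isCompact_singleton.mul hPcomp).mul isCompact_singleton).mul ih
    set K : Option (List {a : G // a ∈ F}) → Set G :=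
      fun o => o.elim (connectedComponent (1 : G))ᶜ (fun bs => PathQProd P (bs.map (↑)))
      with hK
    have hKclosed : ∀ o, IsClosed (K o) := by
      rintro (_ | bs)
      · exact isClosed_compl_iff.2 isOpen_connectedComponent
      · exact (hQcomp _).isClosed
    have hKcover : ⋃ o, K o = Set.univ := by
      ext x
      simp only [Set.mem_univ, iff_true, Set.mem_iUnion]
      by_cases hx : x ∈ connectedComponent (1 : G)
      · have hxH : x ∈ H := by
          rw [hH]
          have := hFeq
          rw [← this] at hx
          exact hx
        obtain ⟨bs, h⟩ := hmem x hxH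
        exact ⟨some bs, h⟩
      · exact ⟨none, hx⟩
    have hdense := dense_iUnion_interior_of_closed hKclosed hKcover
    obtain ⟨x, hxG, hxU⟩ := hdense.inter_open_nonempty _ isOpen_connectedComponent
      ⟨1, mem_connectedComponent⟩
    obtain ⟨o, ho⟩ := Set.mem_iUnion.1 hxU
    rcases o with _ | bs
    · exfalso
      have : x ∈ (connectedComponent (1 : G))ᶜ := interior_subset ho
      exact this hxG
    · have hne : (interior (PathQProd P (bs.map (↑)))).Nonempty := ⟨x, ho⟩
      set b : List G := (1 : G) :: bs.map (↑) with hb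
      have hQsub : PathQProd P (bs.map (↑)) ⊆ PathQProd P b := by
        intro z hz
        rw [hb, PathQProd_cons]
        have h1 : (1 : G) ∈ ({(1 : G)} : Set G) * P * {(1 : G)⁻¹} := by
          refine ⟨1 * 1, ⟨1, rfl, 1, h1P, rfl⟩, 1⁻¹, rfl, by simp⟩
        simpa using Set.mul_mem_mul h1 hz
      have hne' : (interior (PathQProd P b)).Nonempty :=
        hne.mono (interior_mono hQsub)
      obtain ⟨b', c, hb'ne, heq⟩ := PathQProd_eq_PathLProd_mul P b (by simp [hb])
      rw [heq] at hne'
      have hne'' : (interior (PathLProd P b')).Nonempty :=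
        interior_nonempty_of_mul_singleton hne'
      rcases b' with _ | ⟨a, t⟩
      · exact absurd rfl hb'ne
      refine ⟨t.length, (a :: t).get, ?_⟩
      have h := hne''
      rw [← PathLProd_finRange P (a :: t)] at h
      exact h
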